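/- For every even integer k ≥ 2 and every positive integer n, mi_k(n) ≥ 6^{⌊2n/(9k)⌋}. -/

import Mathlib

open SimpleGraph

/-- `D` is a `k`-dominating independent set of `G`: `D` is independent and every vertex
outside `D` has at least `k` neighbours in `D`. -/
def IsKDIS {V : Type*} [Fintype V] (G : SimpleGraph V) (k : ℕ) (D : Finset V) : Prop :=
  (∀ x ∈ D, ∀ y ∈ D, ¬ G.Adj x y) ∧
  ∀ v : V, v ∉ D → k ≤ (G.neighborSet v ∩ (D : Set V)).ncard

/-- The number of `k`-dominating independent sets of `G`. -/
noncomputable def numKDIS {V : Type*} [Fintype V] (G : SimpleGraph V) (k : ℕ) : ℕ :=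
  Nat.card {D : Finset V // IsKDIS G k D}

/-- `mi k n`: the maximum number of `k`-dominating independent sets in a simple graph
on `n` vertices. -/
noncomputable def mi (k n : ℕ) : ℕ :=
  sSup {m : ℕ | ∃ G : SimpleGraph (Fin n), numKDIS G k = m}

/-- `mDIS k t`: the smallest `n` such that some simple graph on `n` vertices has at least
`t` `k`-dominating independent sets. -/
noncomputable def mDIS (k t : ℕ) : ℕ :=
  sInf {n : ℕ | ∃ G : SimpleGraph (Fin n), t ≤ numKDIS G k}

-- gadget graph: mm copies of blown-up rook complement, plus r isolated vertices
def KDISGraph (mm ll r : ℕ) :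
    SimpleGraph ((Fin mm × Fin 3 × Fin 3 × Fin ll) ⊕ Fin r) where
  Adj x y := match x, y with
    | Sum.inl (c, i, j, _), Sum.inl (c', i', j', _) => c = c' ∧ i ≠ i' ∧ j ≠ j'
    | _, _ => False
  symm := by
    constructor
    rintro (⟨c, i, j, b⟩ | x) (⟨c', i', j', b'⟩ | y) h
    · exact ⟨h.1.symm, h.2.1.symm, h.2.2.symm⟩
    · exact h
    · exact h
    · exact h
  loopless := by
    constructor
    rintro (⟨c, i, j, b⟩ | x) h
    · exact h.2.1 rfl
    · exact h

def DWb {mm : ℕ} (ll r : ℕ) (s : Fin mm → Fin 3 × Bool)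
    (x : (Fin mm × Fin 3 × Fin 3 × Fin ll) ⊕ Fin r) : Bool :=
  match x with
  | Sum.inl (c, i, j, _) => if (s c).2 then i == (s c).1 else j == (s c).1
  | Sum.inr _ => true

def DW (mm ll r : ℕ) (s : Fin mm → Fin 3 × Bool) :
    Finset ((Fin mm × Fin 3 × Fin 3 × Fin ll) ⊕ Fin r) :=
  Finset.univ.filter (fun x => DWb ll r s x = true)

lemma fin3_add_succ_ne : ∀ (j : Fin 3) (a : Fin 2), j + a.succ ≠ j := by decide

lemma fin3_add_succ_inj : ∀ (j : Fin 3) (a a' : Fin 2), j + a.succ = j + a'.succ → a = a' := by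
  decide

lemma isKDIS_DW (mm ll r : ℕ) (s : Fin mm → Fin 3 × Bool) :
    IsKDIS (KDISGraph mm ll r) (2 * ll) (DW mm ll r s) := by
  constructor
  · rintro (⟨c, i, j, b⟩ | x) hx (⟨c', i', j', b'⟩ | y) hy hadj
    · obtain ⟨hc, hi, hj⟩ := hadj
      subst hc
      rw [DW, Finset.mem_filter] at hx hy
      simp only [DW, DWb, Finset.mem_filter, Finset.mem_univ, true_and] at hx hy
      cases h2 : (s c).2 <;> simp [h2] at hx hy
      · exact hj (hx.trans hy.symm)
      · exact hi (hx.trans hy.symm)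
    · exact hadj
    · exact hadj
    · exact hadj
  · rintro (⟨c, i, j, b⟩ | x) hv
    swap
    · exact absurd (by rw [DW, Finset.mem_filter]; simp [DWb]) hv
    rw [DW, Finset.mem_filter] at hv
    simp only [DW, DWb, Finset.mem_filter, Finset.mem_univ, true_and] at hv
    set t := (s c).1 with ht
    cases h2 : (s c).2
    · -- column t chosen, j ≠ t
      have hjt : j ≠ t := by simpa [h2] using hv
      have key : ∀ p : Fin 2 × Fin ll,
          (Sum.inl (c, i + p.1.succ, t, p.2) :
            (Fin mm × Fin 3 × Fin 3 × Fin ll) ⊕ Fin r) ∈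
            (KDISGraph mm ll r).neighborSet (Sum.inl (c, i, j, b)) ∩ ↑(DW mm ll r s) := by
        rintro ⟨a, b'⟩
        constructor
        · exact ⟨rfl, (fin3_add_succ_ne i a).symm, hjt⟩
        · rw [DW, Finset.mem_coe, Finset.mem_filter]; simp [DWb, h2, ht]
      set S := (KDISGraph mm ll r).neighborSet (Sum.inl (c, i, j, b)) ∩ ↑(DW mm ll r s)
      let ψ : Fin 2 × Fin ll → S := fun p => ⟨Sum.inl (c, i + p.1.succ, t, p.2), key p⟩
      have hinj : Function.Injective ψ := by
        rintro ⟨a, b1⟩ ⟨a', b2⟩ h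
        simp only [ψ, Subtype.mk.injEq, Sum.inl.injEq, Prod.mk.injEq] at h
        obtain ⟨-, h1, -, h2⟩ := h
        exact Prod.ext (fin3_add_succ_inj i a a' h1) h2
      have hc := Nat.card_le_card_of_injective ψ hinj
      simpa [Nat.card_eq_fintype_card, S, Nat.card_coe_set_eq, mul_comm] using hc
    · -- row t chosen, i ≠ t
      have hit : i ≠ t := by simpa [h2] using hv
      have key : ∀ p : Fin 2 × Fin ll,
          (Sum.inl (c, t, j + p.1.succ, p.2) :
            (Fin mm × Fin 3 × Fin 3 × Fin ll) ⊕ Fin r) ∈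
            (KDISGraph mm ll r).neighborSet (Sum.inl (c, i, j, b)) ∩ ↑(DW mm ll r s) := by
        rintro ⟨a, b'⟩
        constructor
        · exact ⟨rfl, hit, (fin3_add_succ_ne j a).symm⟩
        · rw [DW, Finset.mem_coe, Finset.mem_filter]; simp [DWb, h2, ht]
      set S := (KDISGraph mm ll r).neighborSet (Sum.inl (c, i, j, b)) ∩ ↑(DW mm ll r s)
      let ψ : Fin 2 × Fin ll → S := fun p => ⟨Sum.inl (c, t, j + p.1.succ, p.2), key p⟩
      have hinj : Function.Injective ψ := by
        rintro ⟨a, b1⟩ ⟨a', b2⟩ h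
        simp only [ψ, Subtype.mk.injEq, Sum.inl.injEq, Prod.mk.injEq] at h
        obtain ⟨-, -, h1, h2⟩ := h
        exact Prod.ext (fin3_add_succ_inj j a a' h1) h2
      have hc := Nat.card_le_card_of_injective ψ hinj
      simpa [Nat.card_eq_fintype_card, S, Nat.card_coe_set_eq, mul_comm] using hc


lemma rc_eq_of_forall : ∀ p q : Fin 3 × Bool,
    (∀ i j : Fin 3, (if p.2 then i == p.1 else j == p.1) =
      (if q.2 then i == q.1 else j == q.1)) → p = q := by decide

lemma DW_injective (mm ll r : ℕ) (hll : 0 < ll) :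
    Function.Injective (DW mm ll r) := by
  intro s s' h
  funext c
  apply rc_eq_of_forall
  intro i j
  have := Finset.ext_iff.mp h (Sum.inl (c, i, j, ⟨0, hll⟩))
  rw [DW, DW, Finset.mem_filter, Finset.mem_filter] at this
  simp only [DW, DWb, Finset.mem_filter, Finset.mem_univ, true_and] at this
  cases h1 : (if (s c).2 then i == (s c).1 else j == (s c).1) <;>
    cases h2 : (if (s' c).2 then i == (s' c).1 else j == (s' c).1) <;>
      simp_all

lemma comap_isKDIS {V W : Type*} [Fintype V] [Fintype W] (e : V ≃ W)
    (G' : SimpleGraph W) (k : ℕ) (D : Finset W) (h : IsKDIS G' k D) :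
    IsKDIS (G'.comap e) k (D.map e.symm.toEmbedding) := by
  constructor
  · intro x hx y hy hadj
    rw [Finset.mem_map] at hx hy
    obtain ⟨a, ha, rfl⟩ := hx
    obtain ⟨b, hb, rfl⟩ := hy
    have : G'.Adj a b := by simpa using hadj
    exact h.1 a ha b hb this
  · intro v hv
    have hev : e v ∉ D := by
      intro hmem
      exact hv (by simpa using Finset.mem_map_of_mem e.symm.toEmbedding hmem)
    have hk := h.2 (e v) hev
    have himg : (G'.comap e).neighborSet v ∩ ↑(D.map e.symm.toEmbedding)
        = e.symm '' (G'.neighborSet (e v) ∩ ↑D) := by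
      ext u
      simp only [Set.mem_inter_iff, SimpleGraph.mem_neighborSet, SimpleGraph.comap_adj,
        Finset.coe_map, Set.mem_image, Finset.mem_coe, Finset.mem_map,
        Equiv.coe_toEmbedding]
      constructor
      · rintro ⟨hadj, w, hw, rfl⟩
        exact ⟨w, ⟨by simpa using hadj, hw⟩, rfl⟩
      · rintro ⟨w, ⟨hadj, hw⟩, rfl⟩
        exact ⟨by simpa using hadj, w, hw, rfl⟩
    rw [himg, Set.ncard_image_of_injective _ e.symm.injective]
    exact hk

lemma numKDIS_comap_ge (n mm ll r : ℕ) (hll : 0 < ll)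
    (e : Fin n ≃ ((Fin mm × Fin 3 × Fin 3 × Fin ll) ⊕ Fin r)) :
    6 ^ mm ≤ numKDIS ((KDISGraph mm ll r).comap e) (2 * ll) := by
  let Φ : (Fin mm → Fin 3 × Bool) →
      {D : Finset (Fin n) // IsKDIS ((KDISGraph mm ll r).comap e) (2 * ll) D} :=
    fun s => ⟨(DW mm ll r s).map e.symm.toEmbedding,
      comap_isKDIS e (KDISGraph mm ll r) (2 * ll) (DW mm ll r s) (isKDIS_DW mm ll r s)⟩
  have hΦ : Function.Injective Φ := by
    intro s s' hss
    have : (DW mm ll r s).map e.symm.toEmbedding = (DW mm ll r s').map e.symm.toEmbedding :=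
      congrArg Subtype.val hss
    exact DW_injective mm ll r hll (Finset.map_injective _ this)
  have := Nat.card_le_card_of_injective Φ hΦ
  calc 6 ^ mm = Nat.card (Fin mm → Fin 3 × Bool) := by
        simp [Nat.card_eq_fintype_card, Fintype.card_fun]
    _ ≤ _ := this

theorem mi_lower_bound_even (k n : ℕ) (hk : 2 ≤ k) (hke : Even k) (hn : 1 ≤ n) :
    6 ^ (2 * n / (9 * k)) ≤ mi k n := by
  obtain ⟨l, hl⟩ := hke
  have hl1 : 1 ≤ l := by omega
  set m := 2 * n / (9 * k) with hm
  have hmn : m * (9 * l) ≤ n := by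
    have h1 : 9 * k = 2 * (9 * l) := by omega
    have h2 : m = n / (9 * l) := by
      rw [hm, h1, Nat.mul_div_mul_left _ _ (by norm_num : 0 < 2)]
    rw [h2]
    exact Nat.div_mul_le_self n (9 * l)
  set r := n - m * (9 * l) with hr
  have hcard : Fintype.card (Fin n)
      = Fintype.card ((Fin m × Fin 3 × Fin 3 × Fin l) ⊕ Fin r) := by
    simp only [Fintype.card_sum, Fintype.card_prod, Fintype.card_fin]
    have h3 : 3 * (3 * l) = 9 * l := by ring
    rw [h3]
    omega
  let e : Fin n ≃ ((Fin m × Fin 3 × Fin 3 × Fin l) ⊕ Fin r) :=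
    Fintype.equivOfCardEq hcard
  have hknum : k = 2 * l := by omega
  have hge : 6 ^ m ≤ numKDIS ((KDISGraph m l r).comap e) k := by
    rw [hknum]
    exact numKDIS_comap_ge n m l r hl1 e
  have hbdd : BddAbove {x : ℕ | ∃ G : SimpleGraph (Fin n), numKDIS G k = x} := by
    refine ⟨Nat.card (Finset (Fin n)), ?_⟩
    rintro x ⟨G, rfl⟩
    exact Nat.card_le_card_of_injective Subtype.val Subtype.val_injective
  have hmem : numKDIS ((KDISGraph m l r).comap e) k ∈
      {x : ℕ | ∃ G : SimpleGraph (Fin n), numKDIS G k = x} :=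
    ⟨_, rfl⟩
  exact hge.trans (le_csSup hbdd hmem)
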